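/- Let G be a discrete group generated by a finite symmetric set V, with word-metric balls B_n satisfying the doubling condition |B_{2n}| ≤ A·|B_n|. Then there exist constants C > 0 and δ > 0 such that for all n ≥ 1, the shell satisfies |B_{n} \ B_{n-1}| ≤ C·n^{-δ}·|B_n|. -/

import Mathlib

open scoped Pointwise
open Finset

private lemma tessera_core {G : Type*} [Group G] [DecidableEq G] (V : Finset G)
    (hone : (1 : G) ∈ V) (hsymm : V⁻¹ = V) (A : ℝ) (hA : 1 ≤ A)
    (hdbl : ∀ n : ℕ, 1 ≤ n → ((V ^ (2 * n)).card : ℝ) ≤ A * (V ^ n).card)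
    (n h : ℕ) (hh : 1 ≤ h) (hn : 4 * h ≤ n) :
    (1 + A ^ 3) * (((V ^ n) \ (V ^ (n - h))).card : ℝ) ≤
      A ^ 3 * (((V ^ n) \ (V ^ (n - 4 * h))).card : ℝ) := by
  classical
  have hA0 : (0 : ℝ) ≤ A := le_trans zero_le_one hA
  set Ann : Finset G := (V ^ n) \ (V ^ (n - h)) with hAnn
  set D : Finset G := (V ^ (n - h)) \ (V ^ (n - 4 * h)) with hD
  set Ann4 : Finset G := (V ^ n) \ (V ^ (n - 4 * h)) with hAnn4
  have hpowinv : ∀ m : ℕ, (V ^ m : Finset G)⁻¹ = V ^ m := by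
    intro m; rw [← inv_pow, hsymm]
  have hone' : ∀ m : ℕ, (1 : G) ∈ V ^ m := by
    intro m
    exact Finset.pow_subset_pow_right hone (Nat.zero_le m)
      (by rw [pow_zero]; exact Finset.one_mem_one)
  set P : Finset G → Prop := fun X =>
    (X : Set G).Pairwise fun a b => Disjoint (a • (V ^ (3 * h))) (b • (V ^ (3 * h))) with hP
  have hFne : ((Ann.powerset).filter P).Nonempty := by
    refine ⟨∅, ?_⟩
    rw [mem_filter, mem_powerset]
    exact ⟨empty_subset _, by simp [hP]⟩
  obtain ⟨X, hXmem, hXmax⟩ := Finset.exists_max_image ((Ann.powerset).filter P) Finset.card hFne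
  rw [mem_filter, mem_powerset] at hXmem
  obtain ⟨hXsub, hXP⟩ := hXmem
  -- maximality gives a covering property
  have hcover : ∀ y ∈ Ann, ∃ x ∈ X, ¬ Disjoint (y • (V ^ (3 * h))) (x • (V ^ (3 * h))) := by
    intro y hy
    by_contra hcon
    push_neg at hcon
    have hyX : y ∉ X := by
      intro hyX
      have hd := hcon y hyX
      rw [disjoint_self] at hd
      have hne : (y • (V ^ (3 * h)) : Finset G).Nonempty :=
        ⟨y, mem_smul_finset.2 ⟨1, hone' _, by simp⟩⟩
      rw [hd] at hne
      exact not_nonempty_empty hne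
    have hins : insert y X ∈ (Ann.powerset).filter P := by
      rw [mem_filter, mem_powerset]
      constructor
      · exact insert_subset hy hXsub
      · show ((insert y X : Finset G) : Set G).Pairwise _
        rw [coe_insert]
        refine (@Set.pairwise_insert_of_symm _ _ _ _ ⟨?_⟩).2 ⟨hXP, ?_⟩
        · intro a b hab
          exact hab.symm
        · intro b hb _
          exact hcon b hb
    have hcard := hXmax _ hins
    rw [card_insert_of_notMem hyX] at hcard
    omega
  have hcov2 : Ann ⊆ X.biUnion (fun x => x • (V ^ (6 * h))) := by
    intro y hy
    obtain ⟨x, hxX, hnd⟩ := hcover y hy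
    rw [Finset.not_disjoint_iff] at hnd
    obtain ⟨z, hz1, hz2⟩ := hnd
    rw [mem_smul_finset] at hz1 hz2
    obtain ⟨b, hb, hzb⟩ := hz1
    obtain ⟨c, hc, hzc⟩ := hz2
    refine mem_biUnion.2 ⟨x, hxX, mem_smul_finset.2 ⟨c * b⁻¹, ?_, ?_⟩⟩
    · have hbinv : b⁻¹ ∈ V ^ (3 * h) := by
        rw [← hpowinv (3 * h)]; exact inv_mem_inv hb
      have hmul : c * b⁻¹ ∈ V ^ (3 * h) * V ^ (3 * h) := mul_mem_mul hc hbinv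
      rwa [← pow_add, (show 3 * h + 3 * h = 6 * h by ring)] at hmul
    · rw [smul_eq_mul] at hzb hzc ⊢
      rw [← mul_assoc, hzc, ← hzb]
      group
  have hcount1 : Ann.card ≤ X.card * (V ^ (6 * h)).card := by
    calc Ann.card ≤ (X.biUnion fun x => x • (V ^ (6 * h))).card := card_le_card hcov2
      _ ≤ ∑ x ∈ X, (x • (V ^ (6 * h))).card := card_biUnion_le
      _ = X.card * (V ^ (6 * h)).card := by
          rw [Finset.sum_congr rfl fun x _ => card_smul_finset x (V ^ (6 * h))]
          rw [Finset.sum_const, smul_eq_mul]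
  -- the pushed-in balls
  have hkey : ∀ x : G, x ∈ Ann → ∃ s : Finset G,
      s ⊆ x • (V ^ (3 * h)) ∧ s ⊆ D ∧ s.card = (V ^ h).card := by
    intro x hx
    rw [hAnn, mem_sdiff] at hx
    obtain ⟨hxn, hxnh⟩ := hx
    have hsplit : (V : Finset G) ^ n = V ^ (n - 2 * h) * V ^ (2 * h) := by
      rw [← pow_add]; congr 1; omega
    rw [hsplit, mem_mul] at hxn
    obtain ⟨p, hp, q, hq, hpq⟩ := hxn
    refine ⟨p • (V ^ h), ?_, ?_, card_smul_finset _ _⟩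
    · intro z hz
      rw [mem_smul_finset] at hz ⊢
      obtain ⟨b, hb, hzb⟩ := hz
      have hqinv : q⁻¹ ∈ V ^ (2 * h) := by
        rw [← hpowinv (2 * h)]; exact inv_mem_inv hq
      refine ⟨q⁻¹ * b, ?_, ?_⟩
      · have hmul := mul_mem_mul hqinv hb
        rwa [← pow_add, (show 2 * h + h = 3 * h by ring)] at hmul
      · rw [smul_eq_mul] at hzb ⊢
        rw [← hzb, ← hpq]
        group
    · intro z hz
      rw [mem_smul_finset] at hz
      obtain ⟨b, hb, hzb⟩ := hz
      rw [smul_eq_mul] at hzb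
      rw [hD, mem_sdiff]
      constructor
      · have hmul : z ∈ V ^ (n - 2 * h) * V ^ h := by
          rw [← hzb]; exact mul_mem_mul hp hb
        rwa [← pow_add, (show n - 2 * h + h = n - h by omega)] at hmul
      · intro hzmem
        have hbinv : b⁻¹ ∈ V ^ h := by
          rw [← hpowinv h]; exact inv_mem_inv hb
        have hpz : p ∈ V ^ (n - 4 * h) * V ^ h := by
          rw [show p = z * b⁻¹ by rw [← hzb]; group]
          exact mul_mem_mul hzmem hbinv
        rw [← pow_add, (show n - 4 * h + h = n - 3 * h by omega)] at hpz
        have hx' : x ∈ V ^ (n - 3 * h) * V ^ (2 * h) := hpq ▸ mul_mem_mul hpz hq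
        rw [← pow_add, (show n - 3 * h + 2 * h = n - h by omega)] at hx'
        exact hxnh hx'
  choose! s hs1 hs2 hs3 using hkey
  have hdisj : ∀ x ∈ X, ∀ y ∈ X, x ≠ y → Disjoint (s x) (s y) := by
    intro x hx y hy hxy
    exact (hXP (mem_coe.2 hx) (mem_coe.2 hy) hxy).mono (hs1 x (hXsub hx)) (hs1 y (hXsub hy))
  have hcount2 : X.card * (V ^ h).card ≤ D.card := by
    have hsum : ∑ x ∈ X, (s x).card = X.card * (V ^ h).card := by
      rw [Finset.sum_congr rfl fun x hx => hs3 x (hXsub hx)]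
      rw [Finset.sum_const, smul_eq_mul]
    calc X.card * (V ^ h).card = (X.biUnion s).card := by
          rw [card_biUnion hdisj, hsum]
      _ ≤ D.card := card_le_card (biUnion_subset.2 fun x hx => hs2 x (hXsub hx))
  have hdb : ((V ^ (6 * h)).card : ℝ) ≤ A ^ 3 * (V ^ h).card := by
    have h1 : ((V ^ (6 * h)).card : ℝ) ≤ ((V ^ (8 * h)).card : ℝ) := by
      exact_mod_cast card_le_card (Finset.pow_subset_pow_right hone (by omega))
    have h2 := hdbl (4 * h) (by omega)
    have h3 := hdbl (2 * h) (by omega)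
    have h4 := hdbl h hh
    rw [show 2 * (4 * h) = 8 * h by ring] at h2
    rw [show 2 * (2 * h) = 4 * h by ring] at h3
    calc ((V ^ (6 * h)).card : ℝ) ≤ ((V ^ (8 * h)).card : ℝ) := h1
      _ ≤ A * (V ^ (4 * h)).card := h2
      _ ≤ A * (A * (V ^ (2 * h)).card) := mul_le_mul_of_nonneg_left h3 hA0
      _ ≤ A * (A * (A * (V ^ h).card)) :=
          mul_le_mul_of_nonneg_left (mul_le_mul_of_nonneg_left h4 hA0) hA0
      _ = A ^ 3 * (V ^ h).card := by ring
  have hDA : D.card + Ann.card ≤ Ann4.card := by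
    have hdisjDA : Disjoint D Ann := by
      have hDs : D ⊆ V ^ (n - h) := sdiff_subset
      exact Finset.disjoint_left.2 fun a haD haA => (mem_sdiff.1 haA).2 (hDs haD)
    have hsub : D ∪ Ann ⊆ Ann4 := by
      intro z hz
      rw [mem_union] at hz
      rw [hAnn4, mem_sdiff]
      rcases hz with hz | hz
      · rw [hD, mem_sdiff] at hz
        exact ⟨Finset.pow_subset_pow_right hone (by omega) hz.1, hz.2⟩
      · rw [hAnn, mem_sdiff] at hz
        exact ⟨hz.1, fun hc => hz.2 (Finset.pow_subset_pow_right hone (by omega) hc)⟩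
    calc D.card + Ann.card = (D ∪ Ann).card := (card_union_of_disjoint hdisjDA).symm
      _ ≤ Ann4.card := card_le_card hsub
  -- put everything together over ℝ
  have c1 : (Ann.card : ℝ) ≤ (X.card : ℝ) * ((V ^ (6 * h)).card : ℝ) := by
    exact_mod_cast hcount1
  have c2 : (X.card : ℝ) * ((V ^ h).card : ℝ) ≤ (D.card : ℝ) := by exact_mod_cast hcount2
  have c4 : (D.card : ℝ) + (Ann.card : ℝ) ≤ (Ann4.card : ℝ) := by exact_mod_cast hDA
  have hX0 : (0 : ℝ) ≤ (X.card : ℝ) := Nat.cast_nonneg _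
  have hA30 : (0 : ℝ) ≤ A ^ 3 := pow_nonneg hA0 3
  have key : (Ann.card : ℝ) ≤ A ^ 3 * ((Ann4.card : ℝ) - (Ann.card : ℝ)) := by
    calc (Ann.card : ℝ) ≤ (X.card : ℝ) * ((V ^ (6 * h)).card : ℝ) := c1
      _ ≤ (X.card : ℝ) * (A ^ 3 * ((V ^ h).card : ℝ)) := mul_le_mul_of_nonneg_left hdb hX0
      _ = A ^ 3 * ((X.card : ℝ) * ((V ^ h).card : ℝ)) := by ring
      _ ≤ A ^ 3 * (D.card : ℝ) := mul_le_mul_of_nonneg_left c2 hA30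
      _ ≤ A ^ 3 * ((Ann4.card : ℝ) - (Ann.card : ℝ)) := by
          apply mul_le_mul_of_nonneg_left _ hA30
          linarith
  nlinarith [key]

private lemma tessera_iter {G : Type*} [Group G] [DecidableEq G] (V : Finset G)
    (hone : (1 : G) ∈ V) (hsymm : V⁻¹ = V) (A : ℝ) (hA : 1 ≤ A)
    (hdbl : ∀ n : ℕ, 1 ≤ n → ((V ^ (2 * n)).card : ℝ) ≤ A * (V ^ n).card) (n : ℕ) :
    ∀ t : ℕ, 4 ^ t ≤ n →
      (((V ^ n) \ (V ^ (n - 1))).card : ℝ) ≤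
        (A ^ 3 / (1 + A ^ 3)) ^ t * (((V ^ n) \ (V ^ (n - 4 ^ t))).card : ℝ) := by
  have hA0 : (0 : ℝ) ≤ A := le_trans zero_le_one hA
  have hpos : (0 : ℝ) < 1 + A ^ 3 := by positivity
  have hθ0 : (0 : ℝ) ≤ A ^ 3 / (1 + A ^ 3) := div_nonneg (pow_nonneg hA0 3) hpos.le
  intro t
  induction t with
  | zero => intro _; simp
  | succ t ih =>
    intro h4
    have hps : (4 : ℕ) ^ (t + 1) = 4 * 4 ^ t := by rw [pow_succ]; ring
    have h4t : 4 ^ t ≤ n := by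
      have : (4:ℕ) ^ t ≤ 4 ^ (t + 1) := Nat.pow_le_pow_right (by norm_num) (Nat.le_succ t)
      omega
    have h4' : 4 * 4 ^ t ≤ n := by omega
    have hcore := tessera_core V hone hsymm A hA hdbl n (4 ^ t)
      (Nat.one_le_pow t 4 (by norm_num)) h4'
    rw [← hps] at hcore
    have step : (((V ^ n) \ (V ^ (n - 4 ^ t))).card : ℝ) ≤
        A ^ 3 / (1 + A ^ 3) * (((V ^ n) \ (V ^ (n - 4 ^ (t + 1)))).card : ℝ) := by
      rw [div_mul_eq_mul_div, le_div_iff₀ hpos]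
      nlinarith [hcore]
    calc (((V ^ n) \ (V ^ (n - 1))).card : ℝ)
        ≤ (A ^ 3 / (1 + A ^ 3)) ^ t * (((V ^ n) \ (V ^ (n - 4 ^ t))).card : ℝ) := ih h4t
      _ ≤ (A ^ 3 / (1 + A ^ 3)) ^ t *
          (A ^ 3 / (1 + A ^ 3) * (((V ^ n) \ (V ^ (n - 4 ^ (t + 1)))).card : ℝ)) :=
          mul_le_mul_of_nonneg_left step (pow_nonneg hθ0 t)
      _ = (A ^ 3 / (1 + A ^ 3)) ^ (t + 1) *
          (((V ^ n) \ (V ^ (n - 4 ^ (t + 1)))).card : ℝ) := by ring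

/-- Tessera: for a finitely generated group whose word-metric balls satisfy the
doubling condition, the shells satisfy `|B_n \ B_{n-1}| ≤ C·n^{-δ}·|B_n|`. -/
theorem doubling_shell_decay {G : Type*} [Group G] [DecidableEq G]
    (V : Finset G) (hone : (1 : G) ∈ V) (hsymm : V⁻¹ = V)
    (hgen : ∀ g : G, ∃ n : ℕ, g ∈ V ^ n)
    (A : ℝ) (hdbl : ∀ n : ℕ, 1 ≤ n → ((V ^ (2 * n)).card : ℝ) ≤ A * (V ^ n).card) :
    ∃ C > (0 : ℝ), ∃ δ > (0 : ℝ), ∀ n : ℕ, 1 ≤ n →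
      (((V ^ n) \ (V ^ (n - 1))).card : ℝ) ≤ C * (n : ℝ) ^ (-δ) * (V ^ n).card := by
  classical
  have hVpos : 0 < V.card := card_pos.2 ⟨1, hone⟩
  have hVsub : V ⊆ V ^ 2 := by
    have hsub := Finset.pow_subset_pow_right hone (show 1 ≤ 2 by norm_num)
    rwa [pow_one] at hsub
  have hA1 : 1 ≤ A := by
    have h2 := hdbl 1 le_rfl
    rw [show 2 * 1 = 2 by norm_num, pow_one] at h2
    have hle : (V.card : ℝ) ≤ ((V ^ 2).card : ℝ) := by exact_mod_cast card_le_card hVsub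
    have hVpos' : (0 : ℝ) < V.card := by exact_mod_cast hVpos
    nlinarith
  have hApos : (0 : ℝ) < A := lt_of_lt_of_le zero_lt_one hA1
  have hA3pos : (0 : ℝ) < A ^ 3 := pow_pos hApos 3
  have hCpos : (0 : ℝ) < (1 + A ^ 3) / A ^ 3 := by positivity
  have hCgt1 : 1 < (1 + A ^ 3) / A ^ 3 := by
    rw [lt_div_iff₀ hA3pos]; linarith
  set δ : ℝ := Real.logb 4 ((1 + A ^ 3) / A ^ 3) with hδ
  have hδpos : 0 < δ := Real.logb_pos (by norm_num) hCgt1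
  refine ⟨(1 + A ^ 3) / A ^ 3, hCpos, δ, hδpos, ?_⟩
  intro n hn
  set t := Nat.log 4 n with ht
  have h4t : 4 ^ t ≤ n := Nat.pow_log_le_self 4 (by omega)
  have hlt : n < 4 ^ (t + 1) := Nat.lt_pow_succ_log_self (by norm_num) n
  have hiter := tessera_iter V hone hsymm A hA1 hdbl n t h4t
  have hsub : (((V ^ n) \ (V ^ (n - 4 ^ t))).card : ℝ) ≤ ((V ^ n).card : ℝ) := by
    exact_mod_cast card_le_card sdiff_subset
  have hθ0 : (0 : ℝ) ≤ A ^ 3 / (1 + A ^ 3) := by positivity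
  -- bound θ^t by C n^(-δ)
  have h4δ : (4 : ℝ) ^ δ = (1 + A ^ 3) / A ^ 3 :=
    Real.rpow_logb (by norm_num) (by norm_num) hCpos
  have hθeq : A ^ 3 / (1 + A ^ 3) = (4 : ℝ) ^ (-δ) := by
    rw [Real.rpow_neg (by norm_num : (0 : ℝ) ≤ 4), h4δ, inv_div]
  have hnpos : (0 : ℝ) < (n : ℝ) := by exact_mod_cast Nat.pos_of_ne_zero (by omega)
  have hn4 : (n : ℝ) ≤ (4 : ℝ) ^ (((t : ℝ)) + 1) := by
    have hcast : ((n : ℝ)) ≤ ((4 ^ (t + 1) : ℕ) : ℝ) := by exact_mod_cast hlt.le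
    have : ((4 ^ (t + 1) : ℕ) : ℝ) = (4 : ℝ) ^ (((t + 1 : ℕ) : ℝ)) := by
      rw [Real.rpow_natCast]; push_cast; ring
    rw [this] at hcast
    convert hcast using 2
    push_cast; ring
  have hθt : (A ^ 3 / (1 + A ^ 3)) ^ t ≤ (1 + A ^ 3) / A ^ 3 * (n : ℝ) ^ (-δ) := by
    have h1 : (A ^ 3 / (1 + A ^ 3)) ^ t = (4 : ℝ) ^ (-δ * (t : ℝ)) := by
      rw [hθeq, ← Real.rpow_natCast ((4 : ℝ) ^ (-δ)) t,
        ← Real.rpow_mul (by norm_num : (0 : ℝ) ≤ 4)]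
    have h2 : ((4 : ℝ) ^ (((t : ℝ)) + 1)) ^ (-δ) ≤ (n : ℝ) ^ (-δ) :=
      Real.rpow_le_rpow_of_nonpos hnpos hn4 (by linarith)
    have h3 : ((4 : ℝ) ^ (((t : ℝ)) + 1)) ^ (-δ) = (4 : ℝ) ^ ((((t : ℝ)) + 1) * (-δ)) :=
      (Real.rpow_mul (by norm_num : (0 : ℝ) ≤ 4) _ _).symm
    have h5 : (1 + A ^ 3) / A ^ 3 * ((4 : ℝ) ^ ((((t : ℝ)) + 1) * (-δ)))
        = (4 : ℝ) ^ (-δ * (t : ℝ)) := by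
      rw [← h4δ, ← Real.rpow_add (by norm_num : (0 : ℝ) < 4)]
      congr 1
      ring
    calc (A ^ 3 / (1 + A ^ 3)) ^ t = (4 : ℝ) ^ (-δ * (t : ℝ)) := h1
      _ = (1 + A ^ 3) / A ^ 3 * ((4 : ℝ) ^ ((((t : ℝ)) + 1) * (-δ))) := h5.symm
      _ = (1 + A ^ 3) / A ^ 3 * ((4 : ℝ) ^ (((t : ℝ)) + 1)) ^ (-δ) := by rw [h3]
      _ ≤ (1 + A ^ 3) / A ^ 3 * (n : ℝ) ^ (-δ) :=
          mul_le_mul_of_nonneg_left h2 hCpos.le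
  calc (((V ^ n) \ (V ^ (n - 1))).card : ℝ)
      ≤ (A ^ 3 / (1 + A ^ 3)) ^ t * (((V ^ n) \ (V ^ (n - 4 ^ t))).card : ℝ) := hiter
    _ ≤ (A ^ 3 / (1 + A ^ 3)) ^ t * ((V ^ n).card : ℝ) :=
        mul_le_mul_of_nonneg_left hsub (pow_nonneg hθ0 t)
    _ ≤ ((1 + A ^ 3) / A ^ 3 * (n : ℝ) ^ (-δ)) * ((V ^ n).card : ℝ) :=
        mul_le_mul_of_nonneg_right hθt (Nat.cast_nonneg _)
    _ = (1 + A ^ 3) / A ^ 3 * (n : ℝ) ^ (-δ) * ((V ^ n).card : ℝ) := by ring
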